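/- arXiv:1806.04821 — 6 statements merged into one kernel-verified Lean document; each statement's English description precedes it below -/
import Mathlib

section
/- If φ : ℝ → ℂ is a classical (C²) nontrivial solution of φ'' - φ + 2|φ|²φ + iαφ = 0 on a periodic interval [-T,T] with α ≠ 0 real, then a contradiction follows; i.e., the equation has no nontrivial periodic classical solutions. -/
open MeasureTheory Set

theorem no_nontrivial_steady_state (T α : ℝ) (hT : 0 < T) (hα : α ≠ 0) (φ : ℝ → ℂ)
    (hC2 : ContDiff ℝ 2 φ)
    (hper : ∀ x, φ (x + 2*T) = φ x)
    (heq : ∀ x, deriv (deriv φ) x - φ x + 2 * ((‖φ x‖ : ℝ) : ℂ)^2 * φ x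
      + Complex.I * (α : ℂ) * φ x = 0) :
    φ = 0 := by
  have hT2 : (0:ℝ) < 2*T := by linarith
  have P : Function.Periodic φ (2*T) := hper
  have hdφ : Differentiable ℝ φ := hC2.differentiable two_ne_zero
  have hC1d : ContDiff ℝ 1 (deriv φ) := by
    have h2 : ContDiff ℝ ((1:ℕ) + 1) φ := by exact_mod_cast hC2
    exact (contDiff_succ_iff_deriv.mp h2).2.2
  have hdd : Differentiable ℝ (deriv φ) := hC1d.differentiable one_ne_zero
  have Pd : Function.Periodic (deriv φ) (2*T) := by
    intro x
    have hfun : (fun y => φ (y + 2*T)) = φ := by funext y; rw [hper]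
    calc deriv φ (x + 2*T) = deriv (fun y => φ (y + 2*T)) x := (deriv_comp_add_const φ (2*T) x).symm
      _ = deriv φ x := by rw [hfun]
  -- the key derivative computation
  have key : ∀ x, HasDerivAt (fun y => (deriv φ y * (starRingEnd ℂ) (φ y)).im)
      (-(α * Complex.normSq (φ x))) x := by
    intro x
    have h1 : HasDerivAt φ (deriv φ x) x := (hdφ x).hasDerivAt
    have h2 : HasDerivAt (deriv φ) (deriv (deriv φ) x) x := (hdd x).hasDerivAt
    have hconj : HasDerivAt (fun y => (starRingEnd ℂ) (φ y)) ((starRingEnd ℂ) (deriv φ x)) x := by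
      exact h1.star
    have hg : HasDerivAt (fun y => deriv φ y * (starRingEnd ℂ) (φ y))
        (deriv (deriv φ) x * (starRingEnd ℂ) (φ x)
          + deriv φ x * (starRingEnd ℂ) (deriv φ x)) x := h2.mul hconj
    have him := Complex.imCLM.hasFDerivAt.comp_hasDerivAt x hg
    have he : deriv (deriv φ) x
        = φ x - 2 * ((‖φ x‖ : ℝ) : ℂ)^2 * φ x - Complex.I * (α : ℂ) * φ x := by
      have := heq x; linear_combination this
    refine him.congr_deriv ?_
    rw [he]
    simp only [Complex.imCLM_apply, Complex.add_im, Complex.mul_im, Complex.sub_im,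
      Complex.sub_re, Complex.mul_re, Complex.I_re, Complex.I_im, Complex.ofReal_re,
      Complex.ofReal_im, Complex.conj_re, Complex.conj_im, Complex.normSq_apply, pow_two,
      Complex.one_re, Complex.one_im, Complex.re_ofNat, Complex.im_ofNat]
    ring
  -- FTC over two periods
  have hcontφ : Continuous φ := hC2.continuous
  have hcontf : Continuous fun x => -(α * Complex.normSq (φ x)) :=
    (continuous_const.mul (Complex.continuous_normSq.comp hC2.continuous)).neg
  have hint := intervalIntegral.integral_eq_sub_of_hasDerivAt
    (f := fun y => (deriv φ y * (starRingEnd ℂ) (φ y)).im)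
    (f' := fun x => -(α * Complex.normSq (φ x)))
    (a := -T) (b := 3*T) (fun x _ => key x)
    (hcontf.intervalIntegrable _ _)
  have hφ3 : φ (3*T) = φ (-T) := by
    rw [show (3:ℝ)*T = T + 2*T by ring, P, ← P (-T)]; ring_nf
  have hd3 : deriv φ (3*T) = deriv φ (-T) := by
    rw [show (3:ℝ)*T = T + 2*T by ring, Pd, ← Pd (-T)]; ring_nf
  simp only [hφ3, hd3, sub_self] at hint
  have hzero : ∫ y in (-T)..(3*T), Complex.normSq (φ y) = 0 := by
    have h1 : ∫ y in (-T)..(3*T), α * Complex.normSq (φ y) = 0 := by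
      rw [← neg_eq_zero, ← intervalIntegral.integral_neg]; exact hint
    rw [intervalIntegral.integral_const_mul] at h1
    exact (mul_eq_zero.mp h1).resolve_left hα
  -- conclude φ = 0
  by_contra hne
  obtain ⟨x₀, hx₀⟩ := Function.ne_iff.mp hne
  obtain ⟨y, hy, hyx⟩ := P.exists_mem_Ico hT2 x₀ (-T)
  set z := y + 2*T with hz
  have hφz : φ z ≠ 0 := by
    rw [hz, P y, ← hyx]; simpa using hx₀
  have hz1 : -T < z := by have := hy.1; simp only [hz]; linarith
  have hz2 : z < 3*T := by have := hy.2; simp only [hz, neg_add_eq_sub] at *; linarith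
  set f : ℝ → ℝ := fun x => Complex.normSq (φ x) with hf
  have hfz : 0 < f z := by
    simpa [hf] using Complex.normSq_pos.mpr hφz
  have hcont : Continuous f := Complex.continuous_normSq.comp hcontφ
  have hU : IsOpen (f ⁻¹' Ioi 0 ∩ Ioo (-T) (3*T)) :=
    (isOpen_Ioi.preimage hcont).inter isOpen_Ioo
  have hzU : z ∈ f ⁻¹' Ioi 0 ∩ Ioo (-T) (3*T) := ⟨hfz, hz1, hz2⟩
  obtain ⟨ε, hε, hball⟩ := Metric.isOpen_iff.mp hU z hzU
  have hsub : Metric.ball z ε ⊆ Function.support f ∩ Ioc (-T) (3*T) := by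
    intro w hw
    obtain ⟨hw1, hw2⟩ := hball hw
    exact ⟨ne_of_gt hw1, Ioo_subset_Ioc_self hw2⟩
  have hpos : 0 < ∫ x in (-T)..(3*T), f x := by
    rw [intervalIntegral.integral_pos_iff_support_of_nonneg_ae
      (Filter.Eventually.of_forall fun x => Complex.normSq_nonneg _)
      (hcont.intervalIntegrable _ _)]
    refine ⟨by linarith, lt_of_lt_of_le ?_ (measure_mono hsub)⟩
    rw [Real.volume_ball]
    simpa using by positivity
  rw [hzero] at hpos
  exact lt_irrefl 0 hpos
end

section
/- Suppose φ = φ₁ + iφ₂ is a solution of -φ'' + φ - 2|φ|²φ = iαφ + h on [-T,T] with α, h real and h > 0. Then α‖φ‖² = h∫_{-T}^{T} φ₂(x)dx, and consequently |α| ≤ h√(2T)/‖φ‖ whenever φ ≠ 0. -/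
theorem alpha_small (T α h : ℝ) (hT : 0 < T) (hh : 0 < h) (φ : ℝ → ℂ)
    (hC2 : ContDiff ℝ 2 φ) (hper : ∀ x, φ (x + 2*T) = φ x)
    (heq : ∀ x, -deriv (deriv φ) x + φ x - 2 * ((‖φ x‖ : ℂ))^2 * φ x
      = Complex.I * (α : ℂ) * φ x + (h : ℂ)) :
    α * (∫ x in (-T)..T, (‖φ x‖)^2) = h * ∫ x in (-T)..T, (φ x).im ∧
    (φ ≠ 0 → |α| ≤ h * Real.sqrt (2*T) / Real.sqrt (∫ x in (-T)..T, (‖φ x‖)^2)) := by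
  have hdiff : Differentiable ℝ φ := hC2.differentiable (by norm_num)
  have hd1 : ContDiff ℝ 1 (deriv φ) := by
    have := (contDiff_succ_iff_deriv (n := 1)).mp (by norm_num; exact hC2)
    exact this.2.2
  have hcont : Continuous φ := hdiff.continuous
  have hcont' : Continuous (deriv φ) := (hd1.differentiable one_ne_zero).continuous
  have hcont'' : Continuous (deriv (deriv φ)) := hd1.continuous_deriv le_rfl
  have hcontf : Continuous (fun x => (‖φ x‖)^2) :=
    (continuous_norm.comp hcont).pow 2
  have hcontim : Continuous (fun x => (φ x).im) := Complex.continuous_im.comp hcont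
  have hTle : (-T : ℝ) ≤ T := by linarith
  -- the potential F
  have hF : ∀ x, HasDerivAt (fun y => ((deriv φ y) * (starRingEnd ℂ) (φ y)).im)
      ((deriv (deriv φ) x * (starRingEnd ℂ) (φ x)).im) x := by
    intro x
    have h1 : HasDerivAt φ (deriv φ x) x := (hdiff x).hasDerivAt
    have h2 : HasDerivAt (deriv φ) (deriv (deriv φ) x) x :=
      (hd1.differentiable one_ne_zero x).hasDerivAt
    have h3 : HasDerivAt (fun y => (starRingEnd ℂ) (φ y)) ((starRingEnd ℂ) (deriv φ x)) x := by
      exact h1.star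
    have h4 := h2.mul h3
    have h5 := (Complex.imCLM.hasFDerivAt.comp_hasDerivAt x h4)
    have h6 : ((deriv (deriv φ) x * (starRingEnd ℂ) (φ x))
        + (deriv φ x * (starRingEnd ℂ) (deriv φ x))).im
        = (deriv (deriv φ) x * (starRingEnd ℂ) (φ x)).im := by
      simp [Complex.mul_conj]
    exact h6 ▸ h5
  -- pointwise identity for the imaginary part
  have hpt : ∀ x, (deriv (deriv φ) x * (starRingEnd ℂ) (φ x)).im
      = h * (φ x).im - α * (‖φ x‖)^2 := by
    intro x
    have hd : deriv (deriv φ) x = φ x - 2 * ((‖φ x‖ : ℂ))^2 * φ x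
        - Complex.I * (α : ℂ) * φ x - (h : ℂ) := by
      linear_combination -(heq x)
    rw [hd]
    simp [Complex.mul_im, Complex.sub_im, Complex.sub_re, Complex.mul_re, Complex.sq_norm,
      Complex.normSq_apply, ← Complex.ofReal_pow]
    ring
  -- periodicity of φ and deriv φ at the endpoints
  have hepT : -T + 2*T = T := by ring
  have hphiT : φ T = φ (-T) := by
    have := hper (-T); rwa [hepT] at this
  have hdphiT : deriv φ T = deriv φ (-T) := by
    have hfun : (fun y => φ (y + 2*T)) = φ := funext hper
    calc deriv φ T = deriv φ (-T + 2*T) := by rw [hepT]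
      _ = deriv (fun y => φ (y + 2*T)) (-T) := (deriv_comp_add_const φ (2*T) (-T)).symm
      _ = deriv φ (-T) := by rw [hfun]
  -- fundamental theorem of calculus
  have hgcont : Continuous (fun x => h * (φ x).im - α * (‖φ x‖)^2) :=
    (continuous_const.mul hcontim).sub (continuous_const.mul hcontf)
  have hFTC : ∫ x in (-T)..T, (h * (φ x).im - α * (‖φ x‖)^2)
      = (fun y => ((deriv φ y) * (starRingEnd ℂ) (φ y)).im) T
        - (fun y => ((deriv φ y) * (starRingEnd ℂ) (φ y)).im) (-T) := by
    exact intervalIntegral.integral_eq_sub_of_hasDerivAt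
      (f := fun y => ((deriv φ y) * (starRingEnd ℂ) (φ y)).im)
      (f' := fun x => h * (φ x).im - α * (‖φ x‖)^2)
      (fun x _ => by have := hF x; rw [hpt x] at this; exact this)
      (hgcont.intervalIntegrable _ _)
  have hzero : ∫ x in (-T)..T, (h * (φ x).im - α * (‖φ x‖)^2) = 0 := by
    rw [hFTC]; simp [hphiT, hdphiT]
  have hint_f : IntervalIntegrable (fun x => (‖φ x‖)^2) MeasureTheory.volume (-T) T :=
    hcontf.intervalIntegrable _ _
  have hint_im : IntervalIntegrable (fun x => (φ x).im) MeasureTheory.volume (-T) T :=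
    hcontim.intervalIntegrable _ _
  have key : α * (∫ x in (-T)..T, (‖φ x‖)^2) = h * ∫ x in (-T)..T, (φ x).im := by
    have := hzero
    rw [intervalIntegral.integral_sub (hint_im.const_mul h)
      (hint_f.const_mul α),
      intervalIntegral.integral_const_mul, intervalIntegral.integral_const_mul] at this
    linarith
  refine ⟨key, fun hφ0 => ?_⟩
  set I2 := ∫ x in (-T)..T, (‖φ x‖)^2 with hI2
  set J := ∫ x in (-T)..T, (φ x).im with hJ
  -- there is a point in the open interval where φ is nonzero
  have hx0 : ∃ x ∈ Set.Ioo (-T) T, φ x ≠ 0 := by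
    by_contra hc
    push_neg at hc
    have hnhds : Set.Ioo (-T) T ∈ nhds (0 : ℝ) := isOpen_Ioo.mem_nhds ⟨by linarith, hT⟩
    have e1 : φ =ᶠ[nhds (0 : ℝ)] (fun _ => (0 : ℂ)) :=
      Filter.eventually_of_mem hnhds (fun x hx => hc x hx)
    have e2 : deriv φ =ᶠ[nhds (0 : ℝ)] deriv (fun _ => (0 : ℂ)) := e1.deriv
    have e3 : deriv (deriv φ) 0 = deriv (deriv (fun _ : ℝ => (0 : ℂ))) 0 := e2.deriv_eq
    have hphi0 : φ 0 = 0 := hc 0 ⟨by linarith, hT⟩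
    have h0 := heq 0
    rw [hphi0] at h0
    simp [e3] at h0
    have : (h : ℂ) = 0 := by simpa using h0.symm
    exact absurd (by exact_mod_cast this) (ne_of_gt hh)
  -- positivity of the L² norm
  have hI2pos : 0 < I2 := by
    rw [hI2]
    rw [intervalIntegral.integral_pos_iff_support_of_nonneg_ae
      (Filter.Eventually.of_forall (fun x => sq_nonneg _)) hint_f]
    refine ⟨by linarith, ?_⟩
    obtain ⟨x₀, hx₀mem, hx₀ne⟩ := hx0
    have hVopen : IsOpen (Function.support (fun x => (‖φ x‖)^2) ∩ Set.Ioo (-T) T) :=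
      hcontf.isOpen_support.inter isOpen_Ioo
    have hVne : x₀ ∈ Function.support (fun x => (‖φ x‖)^2) ∩ Set.Ioo (-T) T := by
      refine ⟨?_, hx₀mem⟩
      simp [Function.mem_support, pow_eq_zero_iff, norm_eq_zero]
      exact hx₀ne
    have hpos := hVopen.measure_pos MeasureTheory.volume ⟨x₀, hVne⟩
    exact lt_of_lt_of_le hpos (MeasureTheory.measure_mono
      (Set.inter_subset_inter_right _ Set.Ioo_subset_Ioc_self))
  have hI2nn : (0:ℝ) ≤ I2 := le_of_lt hI2pos
  set s := Real.sqrt (2*T) with hs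
  set r := Real.sqrt I2 with hr
  have hspos : 0 < s := Real.sqrt_pos.mpr (by linarith)
  have hrpos : 0 < r := Real.sqrt_pos.mpr hI2pos
  have hs2 : s^2 = 2*T := Real.sq_sqrt (by linarith)
  have hr2 : r^2 = I2 := Real.sq_sqrt hI2nn
  set c := r / s with hc
  have hcpos : 0 < c := div_pos hrpos hspos
  -- pointwise Cauchy-Schwarz-style bound
  have himbd : ∀ x ∈ Set.Icc (-T) T, |(φ x).im| ≤ c/2 + (‖φ x‖)^2 / (2*c) := by
    intro x _
    have h1 : |(φ x).im| ≤ ‖φ x‖ := Complex.abs_im_le_norm _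
    have h2 : (φ x).im^2 ≤ (‖φ x‖)^2 := by
      rw [← sq_abs]
      exact pow_le_pow_left₀ (abs_nonneg _) h1 2
    rw [div_add_div _ _ (by norm_num : (2:ℝ) ≠ 0) (ne_of_gt (by linarith : (0:ℝ) < 2*c)),
      le_div_iff₀ (by positivity)]
    nlinarith [sq_nonneg (c - |(φ x).im|), sq_abs ((φ x).im)]
  have habsJ : |J| ≤ T * c + I2 / (2*c) := by
    have h1 : |J| ≤ ∫ x in (-T)..T, |(φ x).im| :=
      intervalIntegral.abs_integral_le_integral_abs hTle
    have h2 : (∫ x in (-T)..T, |(φ x).im|)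
        ≤ ∫ x in (-T)..T, (c/2 + (‖φ x‖)^2 / (2*c)) := by
      refine intervalIntegral.integral_mono_on hTle (hcontim.abs.intervalIntegrable _ _)
        ((continuous_const.add (hcontf.div_const _)).intervalIntegrable _ _) himbd
    have h3 : (∫ x in (-T)..T, (c/2 + (‖φ x‖)^2 / (2*c)))
        = T * c + I2 / (2*c) := by
      rw [intervalIntegral.integral_add (intervalIntegrable_const)
        (hint_f.div_const _), intervalIntegral.integral_const,
        intervalIntegral.integral_div, ← hI2]
      simp only [smul_eq_mul]
      ring
    linarith
  have hTcEq : T * c + I2 / (2*c) = s * r := by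
    rw [hc]
    field_simp
    nlinarith [hs2, hr2, hspos, hrpos]
  have hmain : |α| * I2 ≤ h * (s * r) := by
    have h1 : |α| * I2 = |α * I2| := by
      rw [abs_mul, abs_of_nonneg hI2nn]
    have h2 : |α * I2| = h * |J| := by
      rw [key, abs_mul, abs_of_pos hh]
    calc |α| * I2 = h * |J| := by rw [h1, h2]
      _ ≤ h * (T * c + I2 / (2*c)) := by
          exact mul_le_mul_of_nonneg_left habsJ (le_of_lt hh)
      _ = h * (s * r) := by rw [hTcEq]
  -- conclude
  have hfinal : |α| * r ≤ h * s := by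
    have h1 : (|α| * r) * r ≤ (h * s) * r := by
      calc (|α| * r) * r = |α| * I2 := by rw [← hr2]; ring
        _ ≤ h * (s * r) := hmain
        _ = (h * s) * r := by ring
    exact le_of_mul_le_mul_right h1 hrpos
  exact (le_div_iff₀ hrpos).mpr hfinal
end

section
/- For all κ ∈ (0,1), E(κ)² - (1-κ²)K(κ)² > 0, where K and E are the complete elliptic integrals of the first and second kind. -/
open Real MeasureTheory intervalIntegral Set

-- integral of continuous nonneg function positive at right endpoint is positive
lemma aux_int_pos {f : ℝ → ℝ} (hf : Continuous f) {a b : ℝ} (hab : a < b)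
    (h0 : ∀ x, 0 ≤ f x) (hb : 0 < f b) : 0 < ∫ x in a..b, f x := by
  have hopen : IsOpen (f ⁻¹' Ioi (f b / 2)) := isOpen_Ioi.preimage hf
  have hbmem : b ∈ f ⁻¹' Ioi (f b / 2) := by
    simp only [mem_preimage, mem_Ioi]; linarith
  obtain ⟨ε, hε, hball⟩ := Metric.isOpen_iff.mp hopen b hbmem
  set m := max a (b - ε) with hm
  have hmb : m < b := max_lt hab (by linarith)
  have hpos : ∀ x ∈ Ioo m b, 0 < f x := by
    intro x hx
    have hx1 : x ∈ Metric.ball b ε := by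
      rw [Metric.mem_ball, Real.dist_eq, abs_of_neg (by linarith [hx.2])]
      have h2 : b - ε ≤ m := le_max_right _ _
      linarith [hx.1]
    have := hball hx1
    simp only [mem_preimage, mem_Ioi] at this
    linarith
  have h1 : 0 < ∫ x in m..b, f x :=
    intervalIntegral_pos_of_pos_on (hf.intervalIntegrable _ _) hpos hmb
  have h2 : 0 ≤ ∫ x in a..m, f x :=
    intervalIntegral.integral_nonneg (le_max_left a (b - ε)) (fun x _ => h0 x)
  have h3 := intervalIntegral.integral_add_adjacent_intervals
    ((hf.intervalIntegrable a m : IntervalIntegrable f volume a m)) ((hf.intervalIntegrable m b : IntervalIntegrable f volume m b))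
  linarith [h3]


lemma aux_alg (s c t u k : ℝ) (ht0 : t ≠ 0) (ht : t^2 = 1 - k^2*s^2)
    (hu : u^2 = 1 - k^2) (hcc : c^2 = 1 - s^2) :
    t - u/t - ((1 - k^2*s^2 - u)^2 / t^3)/2
      = k^2/2 * (((c*c + s*(-s))*t - s*c*((0 - k^2*(2*s^1*c))/(2*t)))/t^2) := by
  have key : t^4 - u^2 = k^2*((c^2 - s^2)*t^2 + k^2*s^2*c^2) := by
    rw [show t^4 = (t^2)^2 by ring, ht, hu, hcc]; ring
  have e1 : t - u/t - ((t^2 - u)^2 / t^3)/2 = (t^4 - u^2)/(2*t^3) := by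
    field_simp; ring
  have e2 : k^2/2 * (((c*c + s*(-s))*t - s*c*((0 - k^2*(2*s^1*c))/(2*t)))/t^2)
      = (k^2*((c^2 - s^2)*t^2 + k^2*s^2*c^2))/(2*t^3) := by
    field_simp; ring
  rw [← ht, e1, e2, key]

theorem elliptic_ineq_one (κ : ℝ) (hκ : κ ∈ Set.Ioo (0:ℝ) 1) :
    0 < (∫ θ in (0:ℝ)..(Real.pi/2), Real.sqrt (1 - κ^2 * Real.sin θ^2))^2
      - (1 - κ^2) * (∫ θ in (0:ℝ)..(Real.pi/2), 1 / Real.sqrt (1 - κ^2 * Real.sin θ^2))^2 := by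
  obtain ⟨hκ0, hκ1⟩ := hκ
  have ha : 0 < 1 - κ^2 := by nlinarith
  have hw : ∀ θ : ℝ, 0 < 1 - κ^2 * Real.sin θ^2 := by
    intro θ
    nlinarith [Real.sin_sq_le_one θ, sq_nonneg (Real.sin θ), sq_nonneg κ]
  have hwc : Continuous (fun θ : ℝ => 1 - κ^2 * Real.sin θ^2) := by continuity
  have hswc : Continuous (fun θ : ℝ => Real.sqrt (1 - κ^2 * Real.sin θ^2)) :=
    Real.continuous_sqrt.comp hwc
  have hswpos : ∀ θ : ℝ, 0 < Real.sqrt (1 - κ^2 * Real.sin θ^2) :=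
    fun θ => Real.sqrt_pos.mpr (hw θ)
  have hswne : ∀ θ : ℝ, Real.sqrt (1 - κ^2 * Real.sin θ^2) ≠ 0 := fun θ => (hswpos θ).ne'
  set f : ℝ → ℝ := fun θ =>
    ((1 - κ^2 * Real.sin θ^2) - Real.sqrt (1 - κ^2))^2
      / (Real.sqrt (1 - κ^2 * Real.sin θ^2))^3 with hfdef
  have hfc : Continuous f := by
    apply Continuous.div
    · continuity
    · exact (hswc.pow 3)
    · exact fun θ => pow_ne_zero 3 (hswne θ)
  have hfnn : ∀ θ, 0 ≤ f θ := fun θ =>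
    div_nonneg (sq_nonneg _) (pow_nonneg (Real.sqrt_nonneg _) 3)
  set g₂ : ℝ → ℝ := fun θ =>
    κ^2/2 * (Real.sin θ * Real.cos θ / Real.sqrt (1 - κ^2 * Real.sin θ^2)) with hg2def
  have key : ∀ θ : ℝ, HasDerivAt g₂
      (Real.sqrt (1 - κ^2 * Real.sin θ^2)
        - Real.sqrt (1 - κ^2) / Real.sqrt (1 - κ^2 * Real.sin θ^2) - f θ / 2) θ := by
    intro θ
    have h1 : HasDerivAt (fun θ => Real.sin θ * Real.cos θ)
        (Real.cos θ * Real.cos θ + Real.sin θ * (-Real.sin θ)) θ :=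
      (Real.hasDerivAt_sin θ).mul (Real.hasDerivAt_cos θ)
    have h2 : HasDerivAt (fun θ => 1 - κ^2 * Real.sin θ^2)
        (0 - κ^2 * (2 * Real.sin θ ^ 1 * Real.cos θ)) θ :=
      (hasDerivAt_const θ (1:ℝ)).sub (((Real.hasDerivAt_sin θ).pow 2).const_mul (κ^2))
    have h3 := h2.sqrt (hw θ).ne'
    have h4 := (h1.div h3 (hswne θ)).const_mul (κ^2/2)
    refine h4.congr_deriv (Eq.symm ?_)
    have ht : Real.sqrt (1 - κ^2 * Real.sin θ^2) ^ 2 = 1 - κ^2 * Real.sin θ^2 :=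
      Real.sq_sqrt (hw θ).le
    have hu : Real.sqrt (1 - κ^2) ^ 2 = 1 - κ^2 := Real.sq_sqrt ha.le
    have hsc : Real.sin θ^2 + Real.cos θ^2 = 1 := Real.sin_sq_add_cos_sq θ
    have hcc : Real.cos θ^2 = 1 - Real.sin θ^2 := by linarith
    exact aux_alg (Real.sin θ) (Real.cos θ) _ _ κ (hswne θ) ht hu hcc
  have hcontint : Continuous (fun θ : ℝ =>
      Real.sqrt (1 - κ^2 * Real.sin θ^2)
        - Real.sqrt (1 - κ^2) / Real.sqrt (1 - κ^2 * Real.sin θ^2) - f θ / 2) := by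
    apply Continuous.sub
    · exact hswc.sub (Continuous.div continuous_const hswc hswne)
    · exact hfc.div_const 2
  have hzero : (∫ θ in (0:ℝ)..(Real.pi/2),
      (Real.sqrt (1 - κ^2 * Real.sin θ^2)
        - Real.sqrt (1 - κ^2) / Real.sqrt (1 - κ^2 * Real.sin θ^2) - f θ / 2)) = 0 := by
    rw [intervalIntegral.integral_eq_sub_of_hasDerivAt (fun θ _ => key θ)
      ((hcontint.intervalIntegrable _ _ : IntervalIntegrable _ volume _ _))]
    simp [hg2def]
  have hsplit : (∫ θ in (0:ℝ)..(Real.pi/2),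
      (Real.sqrt (1 - κ^2 * Real.sin θ^2)
        - Real.sqrt (1 - κ^2) / Real.sqrt (1 - κ^2 * Real.sin θ^2) - f θ / 2))
      = (∫ θ in (0:ℝ)..(Real.pi/2), Real.sqrt (1 - κ^2 * Real.sin θ^2))
        - Real.sqrt (1 - κ^2) * (∫ θ in (0:ℝ)..(Real.pi/2), 1 / Real.sqrt (1 - κ^2 * Real.sin θ^2))
        - (∫ θ in (0:ℝ)..(Real.pi/2), f θ) / 2 := by
    rw [intervalIntegral.integral_sub, intervalIntegral.integral_sub,
      intervalIntegral.integral_div]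
    · congr 1
      rw [← intervalIntegral.integral_const_mul]
      simp_rw [mul_one_div]
    · exact (hswc.intervalIntegrable _ _ : IntervalIntegrable _ volume _ _)
    · exact ((Continuous.div continuous_const hswc hswne).intervalIntegrable _ _ :
        IntervalIntegrable _ volume _ _)
    · exact ((hswc.sub (Continuous.div continuous_const hswc hswne)).intervalIntegrable _ _ :
        IntervalIntegrable _ volume _ _)
    · exact ((hfc.div_const 2).intervalIntegrable _ _ : IntervalIntegrable _ volume _ _)
  have hpi : (0:ℝ) < Real.pi/2 := by positivity
  have hFpos : 0 < ∫ θ in (0:ℝ)..(Real.pi/2), f θ := by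
    apply aux_int_pos hfc hpi hfnn
    have h1 : Real.sin (Real.pi/2) = 1 := Real.sin_pi_div_two
    have hlt : 1 - κ^2 < Real.sqrt (1 - κ^2) := by
      have hs1 : Real.sqrt (1 - κ^2) < 1 := by
        nlinarith [Real.sq_sqrt ha.le, sq_nonneg (Real.sqrt (1 - κ^2) - 1)]
      nlinarith [Real.sq_sqrt ha.le, Real.sqrt_pos.mpr ha,
        mul_pos (Real.sqrt_pos.mpr ha) (sub_pos.mpr hs1)]
    have h2 : (1 - κ^2 * Real.sin (Real.pi/2)^2) = 1 - κ^2 := by rw [h1]; ring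
    simp only [hfdef, h2]
    apply div_pos
    · nlinarith
    · exact pow_pos (Real.sqrt_pos.mpr ha) 3
  have hEpos : 0 < ∫ θ in (0:ℝ)..(Real.pi/2), Real.sqrt (1 - κ^2 * Real.sin θ^2) := by
    apply aux_int_pos hswc hpi (fun θ => Real.sqrt_nonneg _) (hswpos _)
  have hKnn : 0 ≤ ∫ θ in (0:ℝ)..(Real.pi/2), 1 / Real.sqrt (1 - κ^2 * Real.sin θ^2) :=
    intervalIntegral.integral_nonneg hpi.le
      (fun θ _ => by positivity)
  rw [hsplit] at hzero
  have hsq : Real.sqrt (1 - κ^2)^2 = 1 - κ^2 := Real.sq_sqrt ha.le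
  have hprod : 0 < ((∫ θ in (0:ℝ)..(Real.pi/2), Real.sqrt (1 - κ^2 * Real.sin θ^2))
      - Real.sqrt (1 - κ^2) * (∫ θ in (0:ℝ)..(Real.pi/2), 1 / Real.sqrt (1 - κ^2 * Real.sin θ^2)))
      * ((∫ θ in (0:ℝ)..(Real.pi/2), Real.sqrt (1 - κ^2 * Real.sin θ^2))
      + Real.sqrt (1 - κ^2) * (∫ θ in (0:ℝ)..(Real.pi/2), 1 / Real.sqrt (1 - κ^2 * Real.sin θ^2))) := by
    apply mul_pos (by linarith)
    have : 0 ≤ Real.sqrt (1 - κ^2) * (∫ θ in (0:ℝ)..(Real.pi/2), 1 / Real.sqrt (1 - κ^2 * Real.sin θ^2)) :=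
      mul_nonneg (Real.sqrt_nonneg _) hKnn
    linarith
  have hrw : Real.sqrt (1 - κ^2)^2 * (∫ θ in (0:ℝ)..(Real.pi/2), 1 / Real.sqrt (1 - κ^2 * Real.sin θ^2))^2
      = (1 - κ^2) * (∫ θ in (0:ℝ)..(Real.pi/2), 1 / Real.sqrt (1 - κ^2 * Real.sin θ^2))^2 := by rw [hsq]
  nlinarith [hprod, hrw]
end

section
/- For all κ ∈ (0,1), 2(1-κ²)K(κ) - (2-κ²)E(κ) < 0. -/
open intervalIntegral

private lemma ellip_ident (m sn u : ℝ) (hu : u ≠ 0) (h2 : u^2 = 1 - m*sn^2) :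
    2*(1-m)*(1/u) - (2-m)*u
      = -(m * (((1-2*sn^2)*u + m*sn^2*(1-sn^2)/u)/u^2 + m*(1-m)*sn^4/u^3)) := by
  have h4 : u^4 = (1-m*sn^2)^2 := by rw [show u^4 = (u^2)^2 by ring, h2]
  have h6 : u^6 = (1-m*sn^2)^3 := by rw [show u^6 = (u^2)^3 by ring, h2]
  have h8 : u^8 = (1-m*sn^2)^4 := by rw [show u^8 = (u^2)^4 by ring, h2]
  field_simp
  linear_combination (-(2-m)*(u^2+1-m*sn^2) + 2-m-2*m*sn^2) * h2

private lemma ellip_deriv (m θ : ℝ) (hs : 0 < 1 - m * Real.sin θ^2) :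
    HasDerivAt (fun t => Real.sin t * Real.cos t / Real.sqrt (1 - m * Real.sin t^2))
      (((1-2*Real.sin θ^2)*Real.sqrt (1 - m*Real.sin θ^2)
         + m*Real.sin θ^2*(1-Real.sin θ^2)/Real.sqrt (1 - m*Real.sin θ^2))
        /(Real.sqrt (1 - m*Real.sin θ^2))^2) θ := by
  have hup : 0 < Real.sqrt (1 - m*Real.sin θ^2) := Real.sqrt_pos.2 hs
  have hg := (((Real.hasDerivAt_sin θ).pow 2).const_mul m).const_sub 1
  have hsq : HasDerivAt Real.sqrt (1/(2*Real.sqrt (1 - m*Real.sin θ^2))) (1 - m*Real.sin θ^2) :=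
    Real.hasDerivAt_sqrt hs.ne'
  have hnum : HasDerivAt (fun t => Real.sin t * Real.cos t)
      (Real.cos θ * Real.cos θ + Real.sin θ * -Real.sin θ) θ :=
    (Real.hasDerivAt_sin θ).mul (Real.hasDerivAt_cos θ)
  have hD := hnum.div (hsq.comp θ hg) hup.ne'
  refine hD.congr_deriv ?_
  simp only [Function.comp_apply, Pi.pow_apply]
  norm_num
  have hpy : Real.cos θ^2 = 1 - Real.sin θ^2 := Real.cos_sq' θ
  field_simp
  linear_combination ((Real.sqrt (1 - Real.sin θ^2*m))^2 + Real.sin θ^2*m)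
      / (Real.sqrt (1 - Real.sin θ^2*m))^3 * hpy

theorem elliptic_ineq_two (κ : ℝ) (hκ : κ ∈ Set.Ioo (0:ℝ) 1) :
    2*(1-κ^2) * (∫ θ in (0:ℝ)..(Real.pi/2), 1 / Real.sqrt (1 - κ^2 * Real.sin θ^2))
      - (2-κ^2) * (∫ θ in (0:ℝ)..(Real.pi/2), Real.sqrt (1 - κ^2 * Real.sin θ^2)) < 0 := by
  obtain ⟨hκ0, hκ1⟩ := hκ
  have hm0 : (0:ℝ) < κ^2 := by positivity
  have hm1 : κ^2 < 1 := by nlinarith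
  have hs : ∀ θ : ℝ, 0 < 1 - κ^2 * Real.sin θ^2 := by
    intro θ
    nlinarith [Real.sin_sq_le_one θ]
  have hu : ∀ θ : ℝ, 0 < Real.sqrt (1 - κ^2 * Real.sin θ^2) :=
    fun θ => Real.sqrt_pos.2 (hs θ)
  have hu2 : ∀ θ : ℝ, (Real.sqrt (1 - κ^2 * Real.sin θ^2))^2 = 1 - κ^2 * Real.sin θ^2 :=
    fun θ => Real.sq_sqrt (hs θ).le
  have cu : Continuous (fun θ : ℝ => Real.sqrt (1 - κ^2 * Real.sin θ^2)) := by
    fun_prop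
  have cf1 : Continuous (fun θ : ℝ => 1 / Real.sqrt (1 - κ^2 * Real.sin θ^2)) :=
    continuous_const.div cu fun θ => (hu θ).ne'
  have int1 : IntervalIntegrable (fun θ : ℝ => 1 / Real.sqrt (1 - κ^2 * Real.sin θ^2))
      MeasureTheory.volume 0 (Real.pi/2) := cf1.intervalIntegrable _ _
  have int2 : IntervalIntegrable (fun θ : ℝ => Real.sqrt (1 - κ^2 * Real.sin θ^2))
      MeasureTheory.volume 0 (Real.pi/2) := cu.intervalIntegrable _ _
  set D : ℝ → ℝ := fun θ => ((1-2*Real.sin θ^2)*Real.sqrt (1 - κ^2*Real.sin θ^2)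
      + κ^2*Real.sin θ^2*(1-Real.sin θ^2)/Real.sqrt (1 - κ^2*Real.sin θ^2))
      /(Real.sqrt (1 - κ^2*Real.sin θ^2))^2 with hDdef
  set q : ℝ → ℝ := fun θ => κ^2*(1-κ^2)*Real.sin θ^4/(Real.sqrt (1 - κ^2*Real.sin θ^2))^3 with hqdef
  have cD : Continuous D := by
    apply Continuous.div _ (cu.pow 2) (fun θ => pow_ne_zero 2 (hu θ).ne')
    exact (Continuous.mul (by fun_prop) cu).add
      (Continuous.div (by fun_prop) cu fun θ => (hu θ).ne')
  have cq : Continuous q :=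
    Continuous.div (by fun_prop) (cu.pow 3) fun θ => pow_ne_zero 3 (hu θ).ne'
  have hFTC : (∫ θ in (0:ℝ)..(Real.pi/2), D θ) = 0 := by
    rw [intervalIntegral.integral_eq_sub_of_hasDerivAt
      (fun θ _ => ellip_deriv (κ^2) θ (hs θ)) (cD.intervalIntegrable _ _)]
    simp
  have key : ∀ θ : ℝ, 2*(1-κ^2)*(1 / Real.sqrt (1 - κ^2 * Real.sin θ^2))
      - (2-κ^2)*Real.sqrt (1 - κ^2 * Real.sin θ^2) = -(κ^2 * (D θ + q θ)) := fun θ =>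
    ellip_ident (κ^2) (Real.sin θ) _ (hu θ).ne' (hu2 θ)
  have e1 : 2*(1-κ^2) * (∫ θ in (0:ℝ)..(Real.pi/2), 1 / Real.sqrt (1 - κ^2 * Real.sin θ^2))
      - (2-κ^2) * (∫ θ in (0:ℝ)..(Real.pi/2), Real.sqrt (1 - κ^2 * Real.sin θ^2))
      = ∫ θ in (0:ℝ)..(Real.pi/2), (2*(1-κ^2)*(1 / Real.sqrt (1 - κ^2 * Real.sin θ^2))
          - (2-κ^2)*Real.sqrt (1 - κ^2 * Real.sin θ^2)) := by
    rw [intervalIntegral.integral_sub (int1.const_mul _) (int2.const_mul _),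
      intervalIntegral.integral_const_mul, intervalIntegral.integral_const_mul]
  have hq_pos : 0 < ∫ θ in (0:ℝ)..(Real.pi/2), q θ := by
    apply intervalIntegral.intervalIntegral_pos_of_pos_on (cq.intervalIntegrable _ _)
    · intro θ hθ
      have hsin : 0 < Real.sin θ :=
        Real.sin_pos_of_pos_of_lt_pi hθ.1 (lt_trans hθ.2 (by linarith [Real.pi_pos]))
      rw [hqdef]
      exact div_pos (mul_pos (mul_pos hm0 (by linarith)) (pow_pos hsin 4)) (pow_pos (hu θ) 3)
    · linarith [Real.pi_pos]
  rw [e1, intervalIntegral.integral_congr (fun θ _ => key θ), intervalIntegral.integral_neg,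
    intervalIntegral.integral_const_mul,
    intervalIntegral.integral_add (cD.intervalIntegrable _ _) (cq.intervalIntegrable _ _), hFTC]
  have := mul_pos hm0 hq_pos
  linarith
end

section
/- For all κ ∈ (0,1), 2K(κ) - ((2-κ²)/(1-κ²))E(κ) < 0. -/
theorem elliptic_ineq_three (κ : ℝ) (hκ : κ ∈ Set.Ioo (0:ℝ) 1) :
    2 * (∫ θ in (0:ℝ)..(Real.pi/2), 1 / Real.sqrt (1 - κ^2 * Real.sin θ^2))
      - ((2-κ^2)/(1-κ^2)) * (∫ θ in (0:ℝ)..(Real.pi/2), Real.sqrt (1 - κ^2 * Real.sin θ^2)) < 0 := by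
  obtain ⟨hκ0, hκ1⟩ := hκ
  have hκ2 : κ^2 < 1 := by nlinarith
  have hκ2' : 0 < κ^2 := by positivity
  set u : ℝ → ℝ := fun θ => 1 - κ^2 * Real.sin θ^2 with hu_def
  set r : ℝ → ℝ := fun θ => Real.sqrt (u θ) with hr_def
  have hu : ∀ θ : ℝ, 0 < u θ := by
    intro θ
    have h1 := Real.sin_sq_le_one θ
    have h2 : κ^2 * Real.sin θ^2 ≤ κ^2 := by nlinarith
    simp only [hu_def]; linarith
  have hr : ∀ θ : ℝ, 0 < r θ := fun θ => Real.sqrt_pos.mpr (hu θ)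
  have hr2 : ∀ θ : ℝ, r θ ^ 2 = u θ := fun θ => Real.sq_sqrt (hu θ).le
  have cu : Continuous u := by fun_prop
  have cr : Continuous r := Real.continuous_sqrt.comp cu
  -- the auxiliary function and its derivative
  set g : ℝ → ℝ := fun θ => (1 - 2 * Real.sin θ ^ 2 + κ^2 * Real.sin θ ^ 4) / r θ ^ 3 with hg_def
  have hderiv : ∀ θ : ℝ, HasDerivAt (fun θ => Real.sin θ * Real.cos θ / r θ) (g θ) θ := by
    intro θ
    have hu' : HasDerivAt u (-(κ^2 * (2 * Real.sin θ * Real.cos θ))) θ := by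
      have h1 : HasDerivAt (fun θ => Real.sin θ ^ 2) (2 * Real.sin θ * Real.cos θ) θ := by
        have := (Real.hasDerivAt_sin θ).pow 2
        exact this.congr_deriv (by norm_num [mul_comm, mul_assoc])
      have := (h1.const_mul (κ^2)).const_sub 1
      simpa [hu_def, mul_comm, mul_assoc, mul_left_comm] using this
    have hr' : HasDerivAt r (-(κ^2 * (2 * Real.sin θ * Real.cos θ)) / (2 * r θ)) θ :=
      hu'.sqrt (hu θ).ne'
    have hn : HasDerivAt (fun θ => Real.sin θ * Real.cos θ)
        (Real.cos θ * Real.cos θ + Real.sin θ * (-Real.sin θ)) θ :=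
      (Real.hasDerivAt_sin θ).mul (Real.hasDerivAt_cos θ)
    have hdiv := hn.div hr' (hr θ).ne'
    refine hdiv.congr_deriv ?_
    symm
    have hrθ := (hr θ).ne'
    have hpyth := Real.sin_sq_add_cos_sq θ
    have hr2θ := hr2 θ
    have hr2θ' : r θ ^ 2 = 1 - κ^2 * Real.sin θ ^ 2 := hr2 θ
    simp only [hg_def]
    field_simp
    linear_combination (-(1:ℝ)) * hpyth +
      (-(Real.cos θ^2 - Real.sin θ^2)) * hr2θ'
  have cg : Continuous g := by
    refine Continuous.div (by fun_prop) (cr.pow 3) fun θ => ?_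
    exact pow_ne_zero 3 (hr θ).ne'
  have hg0 : (∫ θ in (0:ℝ)..(Real.pi/2), g θ) = 0 := by
    rw [intervalIntegral.integral_eq_sub_of_hasDerivAt (fun θ _ => hderiv θ)
      (cg.intervalIntegrable _ _)]
    simp [Real.cos_pi_div_two, Real.sin_zero]
  have key : ∀ θ : ℝ, 2 * (1 / r θ) - ((2-κ^2)/(1-κ^2)) * r θ
      = -(κ^2/(1-κ^2)) * g θ - κ^4 * (Real.sin θ^4 / r θ^3) := by
    intro θ
    have hr2θ' : r θ ^ 2 = 1 - κ^2 * Real.sin θ ^ 2 := hr2 θ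
    have h1 : (1:ℝ) - κ^2 ≠ 0 := by nlinarith
    have hu' : (1:ℝ) - κ^2 * Real.sin θ ^ 2 ≠ 0 := (hu θ).ne'
    have hrθ : r θ ≠ 0 := (hr θ).ne'
    have hinv1 : (1:ℝ) / r θ = r θ / (1 - κ^2 * Real.sin θ ^ 2) := by
      rw [← hr2θ']; field_simp
    have hinv3 : (1:ℝ) / r θ ^ 3 = r θ / (1 - κ^2 * Real.sin θ ^ 2)^2 := by
      rw [← hr2θ']; field_simp
    simp only [hg_def]
    rw [show Real.sin θ^4 / r θ^3 = Real.sin θ^4 * (1 / r θ^3) by ring,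
        show (1 - 2*Real.sin θ^2 + κ^2*Real.sin θ^4) / r θ^3
          = (1 - 2*Real.sin θ^2 + κ^2*Real.sin θ^4) * (1 / r θ^3) by ring,
        hinv3, hinv1]
    field_simp
    ring
  have i1 : IntervalIntegrable (fun θ => 1 / r θ) MeasureTheory.volume 0 (Real.pi/2) :=
    (continuous_const.div cr fun θ => (hr θ).ne').intervalIntegrable _ _
  have i2 : IntervalIntegrable r MeasureTheory.volume 0 (Real.pi/2) := cr.intervalIntegrable _ _
  have i3 : IntervalIntegrable g MeasureTheory.volume 0 (Real.pi/2) := cg.intervalIntegrable _ _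
  have c4 : Continuous fun θ => Real.sin θ^4 / r θ^3 := by
    refine Continuous.div (by fun_prop) (cr.pow 3) fun θ => pow_ne_zero 3 (hr θ).ne'
  have i4 : IntervalIntegrable (fun θ => Real.sin θ^4 / r θ^3) MeasureTheory.volume 0 (Real.pi/2) :=
    c4.intervalIntegrable _ _
  have hIpos : 0 < ∫ θ in (0:ℝ)..(Real.pi/2), Real.sin θ^4 / r θ^3 := by
    refine intervalIntegral.intervalIntegral_pos_of_pos_on i4 (fun x hx => ?_) (by linarith [Real.pi_pos])
    have hs : 0 < Real.sin x :=
      Real.sin_pos_of_pos_of_lt_pi hx.1 (lt_trans hx.2 (by linarith [Real.pi_pos]))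
    exact div_pos (pow_pos hs 4) (pow_pos (hr x) 3)
  have hEq : 2 * (∫ θ in (0:ℝ)..(Real.pi/2), 1 / r θ)
      - ((2-κ^2)/(1-κ^2)) * (∫ θ in (0:ℝ)..(Real.pi/2), r θ)
      = -(κ^4) * ∫ θ in (0:ℝ)..(Real.pi/2), Real.sin θ^4 / r θ^3 := by
    rw [← intervalIntegral.integral_const_mul, ← intervalIntegral.integral_const_mul,
      ← intervalIntegral.integral_sub (i1.const_mul _) (i2.const_mul _)]
    rw [show (fun θ => 2 * (1 / r θ) - ((2-κ^2)/(1-κ^2)) * r θ)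
        = fun θ => -(κ^2/(1-κ^2)) * g θ - κ^4 * (Real.sin θ^4 / r θ^3) from funext key]
    rw [intervalIntegral.integral_sub (i3.const_mul _) (i4.const_mul _),
      intervalIntegral.integral_const_mul, intervalIntegral.integral_const_mul, hg0]
    ring
  calc 2 * (∫ θ in (0:ℝ)..(Real.pi/2), 1 / r θ)
      - ((2-κ^2)/(1-κ^2)) * (∫ θ in (0:ℝ)..(Real.pi/2), r θ)
      = -(κ^4) * ∫ θ in (0:ℝ)..(Real.pi/2), Real.sin θ^4 / r θ^3 := hEq
    _ < 0 := by
        have : 0 < κ^4 := by positivity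
        nlinarith
end

section
/- For κ ∈ (0,1), the quantity (E(κ)² - (1-κ²)K(κ)²)/(2[2(1-κ²)K(κ) - (2-κ²)E(κ)]) is strictly negative. -/
open Real intervalIntegral in
private lemma elliptic_aux_I3 (κ : ℝ) (hκ0 : 0 < κ) (hκ1 : κ < 1) :
    (∫ θ in (0:ℝ)..(Real.pi/2), 1 / (Real.sqrt (1 - κ^2 * Real.sin θ^2))^3)
      = (∫ θ in (0:ℝ)..(Real.pi/2), Real.sqrt (1 - κ^2 * Real.sin θ^2)) / (1-κ^2) := by
  have hb : (0:ℝ) < 1 - κ^2 := by nlinarith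
  have hin : ∀ θ : ℝ, 1 - κ^2 ≤ 1 - κ^2 * Real.sin θ^2 := by
    intro θ; nlinarith [Real.sin_sq_le_one θ, sq_nonneg (Real.sin θ)]
  have hpos : ∀ θ : ℝ, 0 < 1 - κ^2 * Real.sin θ^2 := fun θ => lt_of_lt_of_le hb (hin θ)
  have hwpos : ∀ θ : ℝ, 0 < Real.sqrt (1 - κ^2 * Real.sin θ^2) :=
    fun θ => Real.sqrt_pos.2 (hpos θ)
  have hw2 : ∀ θ : ℝ, (Real.sqrt (1 - κ^2 * Real.sin θ^2))^2 = 1 - κ^2 * Real.sin θ^2 :=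
    fun θ => Real.sq_sqrt (hpos θ).le
  have hwc : Continuous (fun θ : ℝ => Real.sqrt (1 - κ^2 * Real.sin θ^2)) :=
    (continuous_const.sub (continuous_const.mul (Real.continuous_sin.pow 2))).sqrt
  have hderiv : ∀ θ : ℝ, HasDerivAt
      (fun θ => Real.sin θ * Real.cos θ / Real.sqrt (1 - κ^2 * Real.sin θ^2))
      (((1-κ^2)/κ^2) * (Real.sqrt (1 - κ^2 * Real.sin θ^2) / (1-κ^2)
        - 1 / (Real.sqrt (1 - κ^2 * Real.sin θ^2))^3)) θ := by
    intro θ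
    have h1 : HasDerivAt (fun θ : ℝ => 1 - κ^2 * Real.sin θ^2)
        (-(κ^2 * (2 * Real.sin θ ^ 1 * Real.cos θ))) θ := by
      simpa using (((Real.hasDerivAt_sin θ).pow 2).const_mul (κ^2)).const_sub 1
    have h2 := h1.sqrt (hpos θ).ne'
    have h3 : HasDerivAt (fun θ => Real.sin θ * Real.cos θ)
        (Real.cos θ * Real.cos θ + Real.sin θ * (-Real.sin θ)) θ :=
      (Real.hasDerivAt_sin θ).mul (Real.hasDerivAt_cos θ)
    have h4 := h3.fun_div h2 (hwpos θ).ne'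
    refine h4.congr_deriv (Eq.symm ?_)
    have hs := Real.sin_sq_add_cos_sq θ
    set u := Real.sqrt (1 - κ^2 * Real.sin θ^2) with hu
    have hu2 := hw2 θ
    have hune : u ≠ 0 := (hwpos θ).ne'
    have hk2 : κ^2 ≠ 0 := by positivity
    have core : u^4 - (1-κ^2) = κ^2*((Real.cos θ^2 - Real.sin θ^2)*u^2 + κ^2*Real.sin θ^2*Real.cos θ^2) := by
      rw [show u^4 = (u^2)^2 by ring, hu2, Real.cos_sq']
      ring
    field_simp
    linear_combination core
  have hc3 : Continuous (fun θ : ℝ => 1 / (Real.sqrt (1 - κ^2 * Real.sin θ^2))^3) :=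
    continuous_const.div (hwc.pow 3) (fun θ => pow_ne_zero 3 (hwpos θ).ne')
  have hcmix : Continuous (fun θ : ℝ => ((1-κ^2)/κ^2) * (Real.sqrt (1 - κ^2 * Real.sin θ^2) / (1-κ^2)
        - 1 / (Real.sqrt (1 - κ^2 * Real.sin θ^2))^3)) :=
    continuous_const.mul ((hwc.div_const _).sub hc3)
  have hftc := intervalIntegral.integral_eq_sub_of_hasDerivAt
    (f := fun θ => Real.sin θ * Real.cos θ / Real.sqrt (1 - κ^2 * Real.sin θ^2))
    (f' := fun θ => ((1-κ^2)/κ^2) * (Real.sqrt (1 - κ^2 * Real.sin θ^2) / (1-κ^2)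
        - 1 / (Real.sqrt (1 - κ^2 * Real.sin θ^2))^3))
    (a := 0) (b := Real.pi/2)
    (fun x _ => hderiv x) (hcmix.intervalIntegrable _ _)
  simp only [Real.cos_pi_div_two, Real.sin_zero, mul_zero, zero_mul, zero_div, sub_zero] at hftc
  rw [intervalIntegral.integral_const_mul,
    intervalIntegral.integral_sub ((hwc.div_const _).intervalIntegrable _ _)
      (hc3.intervalIntegrable _ _), intervalIntegral.integral_div] at hftc
  have hne : (1-κ^2)/κ^2 ≠ 0 := by positivity
  rcases mul_eq_zero.1 hftc with h | h
  · exact absurd h hne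
  · linarith [h]

set_option maxHeartbeats 1000000 in
theorem elliptic_quotient_neg (κ : ℝ) (hκ : κ ∈ Set.Ioo (0:ℝ) 1) :
    ((∫ θ in (0:ℝ)..(Real.pi/2), Real.sqrt (1 - κ^2 * Real.sin θ^2))^2
        - (1-κ^2) * (∫ θ in (0:ℝ)..(Real.pi/2), 1 / Real.sqrt (1 - κ^2 * Real.sin θ^2))^2)
      / (2 * (2*(1-κ^2) * (∫ θ in (0:ℝ)..(Real.pi/2), 1 / Real.sqrt (1 - κ^2 * Real.sin θ^2))
        - (2-κ^2) * (∫ θ in (0:ℝ)..(Real.pi/2), Real.sqrt (1 - κ^2 * Real.sin θ^2)))) < 0 := by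
  obtain ⟨hκ0, hκ1⟩ := hκ
  have hb : (0:ℝ) < 1 - κ^2 := by nlinarith
  have hb1 : 1 - κ^2 < 1 := by nlinarith
  set k' : ℝ := Real.sqrt (1 - κ^2) with hk'def
  have hk'pos : 0 < k' := Real.sqrt_pos.2 hb
  have hk'2 : k'^2 = 1 - κ^2 := Real.sq_sqrt hb.le
  have hk'lt1 : k' < 1 := by
    calc k' < Real.sqrt 1 := Real.sqrt_lt_sqrt hb.le hb1
      _ = 1 := Real.sqrt_one
  have hin : ∀ θ : ℝ, 1 - κ^2 ≤ 1 - κ^2 * Real.sin θ^2 := by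
    intro θ; nlinarith [Real.sin_sq_le_one θ, sq_nonneg (Real.sin θ)]
  have hle1 : ∀ θ : ℝ, 1 - κ^2 * Real.sin θ^2 ≤ 1 := by
    intro θ; nlinarith [sq_nonneg (Real.sin θ), sq_nonneg κ]
  have hpos : ∀ θ : ℝ, 0 < 1 - κ^2 * Real.sin θ^2 := fun θ => lt_of_lt_of_le hb (hin θ)
  have hwpos : ∀ θ : ℝ, 0 < Real.sqrt (1 - κ^2 * Real.sin θ^2) :=
    fun θ => Real.sqrt_pos.2 (hpos θ)
  have hw2 : ∀ θ : ℝ, (Real.sqrt (1 - κ^2 * Real.sin θ^2))^2 = 1 - κ^2 * Real.sin θ^2 :=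
    fun θ => Real.sq_sqrt (hpos θ).le
  have hwge : ∀ θ : ℝ, k' ≤ Real.sqrt (1 - κ^2 * Real.sin θ^2) :=
    fun θ => Real.sqrt_le_sqrt (hin θ)
  have hwle1 : ∀ θ : ℝ, Real.sqrt (1 - κ^2 * Real.sin θ^2) ≤ 1 :=
    fun θ => Real.sqrt_le_one.mpr (hle1 θ)
  have hwc : Continuous (fun θ : ℝ => Real.sqrt (1 - κ^2 * Real.sin θ^2)) :=
    (continuous_const.sub (continuous_const.mul (Real.continuous_sin.pow 2))).sqrt
  have hwinvc : Continuous (fun θ : ℝ => 1 / Real.sqrt (1 - κ^2 * Real.sin θ^2)) :=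
    continuous_const.div hwc (fun θ => (hwpos θ).ne')
  have hc3 : Continuous (fun θ : ℝ => 1 / (Real.sqrt (1 - κ^2 * Real.sin θ^2))^3) :=
    continuous_const.div (hwc.pow 3) (fun θ => pow_ne_zero 3 (hwpos θ).ne')
  have hpi : 0 < Real.pi / 2 := by positivity
  set E : ℝ := ∫ θ in (0:ℝ)..(Real.pi/2), Real.sqrt (1 - κ^2 * Real.sin θ^2) with hEdef
  set K : ℝ := ∫ θ in (0:ℝ)..(Real.pi/2), 1 / Real.sqrt (1 - κ^2 * Real.sin θ^2) with hKdef
  have hI3 := elliptic_aux_I3 κ hκ0 hκ1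
  -- K > 0
  have hKpos : 0 < K := by
    rw [hKdef]
    apply intervalIntegral.intervalIntegral_pos_of_pos_on (hwinvc.intervalIntegrable _ _)
    · intro x _
      have := hwpos x
      positivity
    · exact hpi
  -- key1 : K < E / k'
  have hkey1 : K < E / k' := by
    have hstep : K < ∫ θ in (0:ℝ)..(Real.pi/2),
        (k'/2 * (1 / (Real.sqrt (1 - κ^2 * Real.sin θ^2))^3)
          + 1/(2*k') * Real.sqrt (1 - κ^2 * Real.sin θ^2)) := by
      rw [hKdef]
      apply intervalIntegral.integral_lt_integral_of_continuousOn_of_le_of_exists_lt hpi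
        hwinvc.continuousOn ((continuous_const.fun_mul hc3).fun_add (continuous_const.fun_mul hwc)).continuousOn
      · intro θ _
        set u := Real.sqrt (1 - κ^2 * Real.sin θ^2) with hu
        have hupos := hwpos θ
        have hune : u ≠ 0 := hupos.ne'
        rw [← sub_nonneg]
        have e : k'/2 * (1/u^3) + 1/(2*k') * u - 1/u = (u^2 - k')^2 / (2*k'*u^3) := by
          field_simp; ring
        rw [e]; positivity
      · refine ⟨0, ⟨le_refl 0, hpi.le⟩, ?_⟩
        have h0 : Real.sqrt (1 - κ^2 * Real.sin 0^2) = 1 := by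
          simp [Real.sin_zero]
        rw [h0]
        have h2 : (0:ℝ) < (k'-1)*(k'-1) := mul_pos_of_neg_of_neg (by linarith) (by linarith)
        have e : k'/2 * (1/(1:ℝ)^3) + 1/(2*k') * 1 - 1/1 = (k'-1)^2/(2*k') := by
          field_simp; ring
        have hp : 0 < (k'-1)^2/(2*k') := div_pos (by nlinarith) (by positivity)
        linarith [e, hp, e ▸ hp]
    have hval : (∫ θ in (0:ℝ)..(Real.pi/2),
        (k'/2 * (1 / (Real.sqrt (1 - κ^2 * Real.sin θ^2))^3)
          + 1/(2*k') * Real.sqrt (1 - κ^2 * Real.sin θ^2))) = E / k' := by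
      rw [intervalIntegral.integral_add ((continuous_const.fun_mul hc3).intervalIntegrable _ _)
        ((continuous_const.fun_mul hwc).intervalIntegrable _ _),
        intervalIntegral.integral_const_mul, intervalIntegral.integral_const_mul, hI3, ← hEdef]
      have hbne : (1:ℝ) - κ^2 ≠ 0 := hb.ne'
      rw [← hk'2]
      field_simp
      ring
    rw [hval] at hstep
    exact hstep
  have hEgt : k' * K < E := by
    rw [div_eq_mul_inv] at hkey1
    calc k' * K < k' * (E * k'⁻¹) := by
          exact (mul_lt_mul_iff_right₀ hk'pos).2 hkey1
      _ = E := by field_simp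
  have hEpos : 0 < E := lt_trans (by positivity) hEgt
  -- numerator positive
  have hnum : 0 < E^2 - (1-κ^2) * K^2 := by
    nlinarith [mul_pos (sub_pos.2 hEgt) (add_pos hEpos (mul_pos hk'pos hKpos)), hk'2]
  -- denominator negative
  have hden : 2*(1-κ^2) * K - (2-κ^2) * E < 0 := by
    have heq : 2*(1-κ^2) * K - (2-κ^2) * E
        = ∫ θ in (0:ℝ)..(Real.pi/2),
          (2*(1-κ^2) * (1 / Real.sqrt (1 - κ^2 * Real.sin θ^2))
            - (2-κ^2) * Real.sqrt (1 - κ^2 * Real.sin θ^2)) := by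
      rw [intervalIntegral.integral_sub ((continuous_const.fun_mul hwinvc).intervalIntegrable _ _)
        ((continuous_const.fun_mul hwc).intervalIntegrable _ _),
        intervalIntegral.integral_const_mul, intervalIntegral.integral_const_mul, ← hEdef, ← hKdef]
    have hstep : (∫ θ in (0:ℝ)..(Real.pi/2),
        (2*(1-κ^2) * (1 / Real.sqrt (1 - κ^2 * Real.sin θ^2))
          - (2-κ^2) * Real.sqrt (1 - κ^2 * Real.sin θ^2)))
        < ∫ θ in (0:ℝ)..(Real.pi/2),
          (-(κ^2) * Real.cos θ^2 + κ^2 * k' * Real.sin θ^2) := by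
      apply intervalIntegral.integral_lt_integral_of_continuousOn_of_le_of_exists_lt hpi
        ((continuous_const.fun_mul hwinvc).fun_sub (continuous_const.fun_mul hwc)).continuousOn
        ((continuous_const.fun_mul (Real.continuous_cos.fun_pow 2)).fun_add
          (continuous_const.fun_mul (Real.continuous_sin.fun_pow 2))).continuousOn
      · intro θ _
        set u := Real.sqrt (1 - κ^2 * Real.sin θ^2) with hu
        have hupos := hwpos θ
        have hu2 := hw2 θ
        have hule1 := hwle1 θ
        have huge := hwge θ
        have hcs := Real.sin_sq_add_cos_sq θ
        have key : 2*(1-κ^2) - (2-κ^2)*u^2 ≤ (-(κ^2) * Real.cos θ^2 + κ^2 * k' * Real.sin θ^2) * u := by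
          nlinarith [mul_nonneg (sq_nonneg (Real.cos θ)) (sub_nonneg.2 hule1),
            mul_nonneg (mul_nonneg hk'pos.le (sq_nonneg (Real.sin θ))) (sub_nonneg.2 huge),
            hk'2, hu2, hcs, sq_nonneg κ]
        have e : 2*(1-κ^2) * (1/u) - (2-κ^2)*u = (2*(1-κ^2) - (2-κ^2)*u^2)/u := by
          field_simp
        rw [e, div_le_iff₀ hupos]
        exact key
      · refine ⟨Real.pi/4, ⟨by positivity, by linarith [Real.pi_pos]⟩, ?_⟩
        have hs4 : Real.sin (Real.pi/4)^2 = 1/2 := by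
          rw [Real.sin_pi_div_four, div_pow, Real.sq_sqrt (by norm_num : (0:ℝ) ≤ 2)]
          norm_num
        have hc4 : Real.cos (Real.pi/4)^2 = 1/2 := by
          rw [Real.cos_pi_div_four, div_pow, Real.sq_sqrt (by norm_num : (0:ℝ) ≤ 2)]
          norm_num
        rw [hs4, hc4]
        set v := Real.sqrt (1 - κ^2 * (1/2)) with hv
        have harg : 0 < 1 - κ^2 * (1/2) := by nlinarith
        have hvpos : 0 < v := Real.sqrt_pos.2 harg
        have hv2 : v^2 = 1 - κ^2 * (1/2) := Real.sq_sqrt harg.le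
        have hvle1 : v ≤ 1 := Real.sqrt_le_one.mpr (by nlinarith)
        have h1 : 2*(1-κ^2) - (2-κ^2)*v^2 = -κ^4/2 := by rw [hv2]; ring
        have h2 : (1-k')*v ≤ 1-k' := by
          nlinarith [mul_nonneg (sub_nonneg.2 hk'lt1.le) (sub_nonneg.2 hvle1)]
        have h3 : 1-k' < κ^2 := by nlinarith [hk'pos, hk'2]
        have key : 2*(1-κ^2) - (2-κ^2)*v^2 < (-(κ^2) * (1/2) + κ^2 * k' * (1/2)) * v := by
          rw [h1]
          nlinarith [mul_lt_mul_of_pos_left (lt_of_le_of_lt h2 h3) (show (0:ℝ) < κ^2 by positivity)]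
        have e : 2*(1-κ^2) * (1/v) - (2-κ^2)*v = (2*(1-κ^2) - (2-κ^2)*v^2)/v := by
          field_simp
        rw [e, div_lt_iff₀ hvpos]
        exact key
    have hval : (∫ θ in (0:ℝ)..(Real.pi/2),
        (-(κ^2) * Real.cos θ^2 + κ^2 * k' * Real.sin θ^2))
        = -(κ^2) * (Real.pi/4) + κ^2 * k' * (Real.pi/4) := by
      rw [intervalIntegral.integral_add
        ((continuous_const.fun_mul (Real.continuous_cos.fun_pow 2)).intervalIntegrable _ _)
        ((continuous_const.fun_mul (Real.continuous_sin.fun_pow 2)).intervalIntegrable _ _),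
        intervalIntegral.integral_const_mul, intervalIntegral.integral_const_mul,
        integral_sin_sq, integral_cos_sq]
      simp [Real.cos_pi_div_two, Real.sin_zero]
      ring
    have hneg : -(κ^2) * (Real.pi/4) + κ^2 * k' * (Real.pi/4) < 0 := by
      have : κ^2 * (Real.pi/4) * (k' - 1) < 0 := by
        apply mul_neg_of_pos_of_neg (by positivity) (by linarith)
      nlinarith [this]
    rw [heq]
    calc _ < _ := hstep
      _ = _ := hval
      _ < 0 := hneg
  have hden2 : 2 * (2*(1-κ^2) * K - (2-κ^2) * E) < 0 := by linarith
  exact div_neg_of_pos_of_neg hnum hden2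
end
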